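/- Let G be a finite group, V a unitary representation of G, and T : V → V a self-adjoint positive semi-definite G-endomorphism. Then the operator norm of T is at most tr(T)/m_V, where m_V is the minimal dimension of an irreducible subrepresentation of V. -/

import Mathlib

open Module

/-- Sarnak–Xue type bound: for a unitary representation `ρ` of a finite group `G` on `V`
and a self-adjoint positive semidefinite `G`-endomorphism `T` of `V`, the operator norm
of `T` is at most `tr(T)/m`, where `m` lower-bounds the dimension of every irreducible
subrepresentation of `V`. -/
theorem stmt_1 (G : Type) [Group G] [Finite G]
    (V : Type) [NormedAddCommGroup V] [InnerProductSpace ℂ V] [FiniteDimensional ℂ V]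
    (ρ : G →* (V →ₗ[ℂ] V))
    (hunitary : ∀ (g : G) (v w : V), (inner ℂ (ρ g v) (ρ g w) : ℂ) = inner ℂ v w)
    (T : V →ₗ[ℂ] V)
    (hself : LinearMap.IsSymmetric T)
    (hpos : ∀ v : V, 0 ≤ (inner ℂ (T v) v : ℂ).re)
    (hcomm : ∀ g : G, T ∘ₗ ρ g = ρ g ∘ₗ T)
    (m : ℕ) (hm : 0 < m)
    (hmin : ∀ W : Submodule ℂ V, W ≠ ⊥ → (∀ (g : G), ∀ v ∈ W, ρ g v ∈ W) →
      (∀ W' : Submodule ℂ V, W' ≤ W → W' ≠ ⊥ →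
        (∀ (g : G), ∀ v ∈ W', ρ g v ∈ W') → W' = W) →
      m ≤ finrank ℂ W) :
    ‖LinearMap.toContinuousLinearMap T‖ ≤ (LinearMap.trace ℂ V T).re / m := by
  have hn : finrank ℂ V = finrank ℂ V := rfl
  set n := finrank ℂ V with hndef
  rcases Nat.eq_zero_or_pos n with h0 | hnpos
  · -- trivial case: V = 0
    have hsub : Subsingleton V := finrank_zero_iff.mp h0
    have hT0 : T = 0 := Subsingleton.elim _ _
    subst hT0
    simp only [map_zero, norm_zero, Complex.zero_re]
    positivity
  -- main case
  classical
  have hne : Nonempty (Fin n) := Fin.pos_iff_nonempty.mp hnpos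
  set B := hself.eigenvectorBasis hn with hBdef
  set lam := hself.eigenvalues hn with hlamdef
  have happly : ∀ i, T (B i) = (lam i : ℂ) • B i := hself.apply_eigenvectorBasis hn
  have hreprT : ∀ (v : V) (i : Fin n), B.repr (T v) i = (lam i : ℂ) * B.repr v i :=
    fun v i => hself.eigenvectorBasis_apply_self_apply hn v i
  -- eigenvalues are nonnegative
  have hlamnn : ∀ i, 0 ≤ lam i := by
    intro i
    have h1 := hpos (B i)
    have h2 : (inner ℂ (T (B i)) (B i) : ℂ) = (lam i : ℂ) := by
      rw [happly, inner_smul_left]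
      have : (inner ℂ (B i) (B i) : ℂ) = 1 := by
        rw [inner_self_eq_norm_sq_to_K, B.orthonormal.1 i]
        norm_num
      rw [this, mul_one, Complex.conj_ofReal]
    rw [h2] at h1
    simpa using h1
  -- the top eigenvalue
  set μ := Finset.univ.sup' (Finset.univ_nonempty) lam with hμdef
  have hle : ∀ i, lam i ≤ μ := fun i => Finset.le_sup' lam (Finset.mem_univ i)
  obtain ⟨i₀, -, hi₀⟩ := Finset.exists_mem_eq_sup' (Finset.univ_nonempty) lam
  have hμnn : 0 ≤ μ := le_trans (hlamnn i₀) (hle i₀)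
  -- operator norm bound
  have hnorm : ‖LinearMap.toContinuousLinearMap T‖ ≤ μ := by
    refine ContinuousLinearMap.opNorm_le_bound _ hμnn ?_
    intro v
    simp only [LinearMap.coe_toContinuousLinearMap']
    have h1 : ‖T v‖ = Real.sqrt (∑ i, ‖B.repr (T v) i‖ ^ 2) := by
      rw [← B.repr.norm_map (T v), EuclideanSpace.norm_eq]
    have h2 : ‖v‖ = Real.sqrt (∑ i, ‖B.repr v i‖ ^ 2) := by
      rw [← B.repr.norm_map v, EuclideanSpace.norm_eq]
    rw [h1, h2, ← Real.sqrt_sq hμnn, ← Real.sqrt_mul (by positivity)]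
    apply Real.sqrt_le_sqrt
    rw [Finset.mul_sum]
    apply Finset.sum_le_sum
    intro i _
    rw [hreprT, norm_mul, mul_pow]
    apply mul_le_mul_of_nonneg_right _ (by positivity)
    have : ‖(lam i : ℂ)‖ = |lam i| := by
      rw [Complex.norm_real, Real.norm_eq_abs]
    rw [this]
    have habs : |lam i| ≤ μ := abs_le.mpr ⟨le_trans (neg_nonpos.mpr hμnn) (hlamnn i), hle i⟩
    exact pow_le_pow_left₀ (abs_nonneg _) habs 2
  -- trace as sum of eigenvalues
  have htr : LinearMap.trace ℂ V T = ∑ i, (lam i : ℂ) := by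
    rw [LinearMap.trace_eq_matrix_trace ℂ B.toBasis T, Matrix.trace]
    apply Finset.sum_congr rfl
    intro i _
    rw [Matrix.diag_apply, LinearMap.toMatrix_apply, OrthonormalBasis.coe_toBasis,
      OrthonormalBasis.coe_toBasis_repr_apply, hreprT, OrthonormalBasis.repr_self]
    simp [EuclideanSpace.single_apply]
  -- the eigenspace of μ
  set E := Module.End.eigenspace T (μ : ℂ) with hEdef
  have hE_ne : E ≠ ⊥ := by
    intro hbot
    have hμi : (lam i₀ : ℝ) = μ := by rw [hμdef]; exact hi₀.symm
    have hmem : B i₀ ∈ E := by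
      rw [hEdef, Module.End.mem_eigenspace_iff, happly, hμi]
    rw [hbot, Submodule.mem_bot] at hmem
    exact (B.toBasis.ne_zero i₀) (by rwa [OrthonormalBasis.coe_toBasis])
  have hE_inv : ∀ g, ∀ v ∈ E, ρ g v ∈ E := by
    intro g v hv
    rw [Module.End.mem_eigenspace_iff] at hv ⊢
    have hc : T (ρ g v) = ρ g (T v) := congrFun (congrArg (fun f => f.toFun) (hcomm g)) v
    rw [hc, hv, map_smul]
  -- find a minimal invariant subspace inside E
  have hmE : m ≤ finrank ℂ E := by
    set P : Submodule ℂ V → Prop := fun W => W ≤ E ∧ W ≠ ⊥ ∧ ∀ g, ∀ v ∈ W, ρ g v ∈ W with hPdef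
    set S : Set ℕ := {k | ∃ W, P W ∧ finrank ℂ W = k} with hSdef
    have hSne : S.Nonempty := ⟨finrank ℂ E, E, ⟨le_rfl, hE_ne, hE_inv⟩, rfl⟩
    obtain ⟨W, hPW, hWr⟩ := Nat.sInf_mem hSne
    have hmW : m ≤ finrank ℂ W := by
      apply hmin W hPW.2.1 hPW.2.2
      intro W' hle' hne' hinv'
      have hk : sInf S ≤ finrank ℂ W' :=
        Nat.sInf_le ⟨W', ⟨hle'.trans hPW.1, hne', hinv'⟩, rfl⟩
      exact Submodule.eq_of_le_of_finrank_le hle' (hWr ▸ hk)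
    exact le_trans hmW (Submodule.finrank_mono hPW.1)
  -- E is contained in the span of the eigenvectors with eigenvalue μ
  set t : Finset (Fin n) := Finset.univ.filter (fun i => lam i = μ) with htdef
  have hEspan : E ≤ Submodule.span ℂ (↑(t.image B) : Set V) := by
    intro v hv
    rw [Module.End.mem_eigenspace_iff] at hv
    have hcoef : ∀ i, lam i ≠ μ → B.repr v i = 0 := by
      intro i hnei
      have h1 : (lam i : ℂ) * B.repr v i = (μ : ℂ) * B.repr v i := by
        rw [← hreprT, hv, map_smul, PiLp.smul_apply, smul_eq_mul]
      by_contra h0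
      exact hnei (Complex.ofReal_inj.mp (mul_right_cancel₀ h0 h1))
    rw [← B.sum_repr v]
    apply Submodule.sum_mem
    intro i _
    by_cases hi : lam i = μ
    · exact Submodule.smul_mem _ _ (Submodule.subset_span (by
        simp only [Finset.coe_image, Set.mem_image, Finset.mem_coe, htdef]
        exact ⟨i, by simp [hi], rfl⟩))
    · rw [hcoef i hi, zero_smul]
      exact Submodule.zero_mem _
  have hcard : m ≤ t.card := by
    calc m ≤ finrank ℂ E := hmE
      _ ≤ finrank ℂ (Submodule.span ℂ (↑(t.image B) : Set V)) := Submodule.finrank_mono hEspan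
      _ ≤ (t.image B).card := by
          have h := finrank_span_finset_le_card (R := ℂ) (t.image B)
          rwa [Set.finrank] at h
      _ ≤ t.card := Finset.card_image_le
  -- the sum of eigenvalues is at least μ * m
  have hsum : μ * m ≤ ∑ i, lam i := by
    calc μ * m ≤ μ * t.card := by
          apply mul_le_mul_of_nonneg_left _ hμnn
          exact_mod_cast hcard
      _ = ∑ _i ∈ t, μ := by rw [Finset.sum_const, nsmul_eq_mul, mul_comm]
      _ = ∑ i ∈ t, lam i := by
          apply Finset.sum_congr rfl
          intro i hi
          rw [htdef, Finset.mem_filter] at hi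
          exact hi.2.symm
      _ ≤ ∑ i, lam i :=
          Finset.sum_le_sum_of_subset_of_nonneg (Finset.subset_univ t) (fun i _ _ => hlamnn i)
  have htr_re : (LinearMap.trace ℂ V T).re = ∑ i, lam i := by
    rw [htr]
    rw [Complex.re_sum]
    simp
  rw [htr_re]
  refine hnorm.trans ?_
  rw [le_div_iff₀ (by exact_mod_cast hm)]
  exact hsum
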